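/- arXiv:2403.03151 — 2 statements merged into one kernel-verified Lean document; each statement's English description precedes it below -/
import Mathlib

section
/- Let $\mathcal{P}$ be a finite set of points in the plane with distinct $x$- and $y$-coordinates, and let $R = [0,\delta] \times [a,b]$ be a rectangle. Then every chain of $\mathrm{BST}(\mathcal{P} \cap R)$ is also a chain of $\mathrm{BST}(\mathcal{P})$; consequently $h(\mathrm{BST}(\mathcal{P} \cap R)) \le h(\mathrm{BST}(\mathcal{P}))$. -/
/-- Binary trees with real labels. -/
inductive BTree where
  | leaf : BTree
  | node : BTree → ℝ → BTree → BTree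

namespace BTree

/-- Insertion of a value into a binary search tree. -/
noncomputable def insert (x : ℝ) : BTree → BTree
  | leaf => node leaf x leaf
  | node l y r => if x < y then node (insert x l) y r else node l y (insert x r)

/-- Number of nodes. -/
def size : BTree → ℕ
  | leaf => 0
  | node l _ r => size l + 1 + size r

/-- Number of nodes on a longest root-to-leaf path. -/
def depth : BTree → ℕ
  | leaf => 0
  | node l _ r => 1 + max (depth l) (depth r)

/-- Height: maximal number of edges from the root to a leaf (`-1` for the empty tree). -/
def height (t : BTree) : ℤ := (depth t : ℤ) - 1

/-- The value `x` is a label of the tree. -/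
def Mem (x : ℝ) : BTree → Prop
  | leaf => False
  | node l y r => x = y ∨ Mem x l ∨ Mem x r

/-- The node labeled `a` is a (strict) ancestor of the node labeled `b`. -/
def IsAncestor (a b : ℝ) : BTree → Prop
  | leaf => False
  | node l y r => (a = y ∧ (Mem b l ∨ Mem b r)) ∨ IsAncestor a b l ∨ IsAncestor a b r

/-- A set of labels is a chain if any two of its nodes are comparable for the
ancestor relation. -/
def IsChain (t : BTree) (C : Set ℝ) : Prop :=
  ∀ a ∈ C, ∀ b ∈ C, a = b ∨ IsAncestor a b t ∨ IsAncestor b a t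

end BTree

/-- The binary search tree obtained by inserting the elements of a list in order. -/
noncomputable def bstOfList (l : List ℝ) : BTree := l.foldl (fun t x => t.insert x) .leaf

/-- The BST of a list of planar points, already sorted by increasing `x`-coordinate:
insert the `y`-coordinates in order. -/
noncomputable def bstOfSortedPts (l : List (ℝ × ℝ)) : BTree := bstOfList (l.map Prod.snd)

open scoped Classical in
/-- The BST of a finite set of planar points, given as a list: sort the points by
increasing `x`-coordinate and insert the `y`-coordinates in this order. -/
noncomputable def bstOfPts (l : List (ℝ × ℝ)) : BTree :=
  bstOfSortedPts (l.mergeSort (fun p q => decide (p.1 ≤ q.1)))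

open scoped Classical in
/-- Length of a longest increasing subsequence of `f`. -/
noncomputable def lisLen {n : ℕ} {β : Type*} [Preorder β] (f : Fin n → β) : ℕ :=
  Finset.univ.sup fun s : Finset (Fin n) => if StrictMonoOn f ↑s then s.card else 0

open scoped Classical in
/-- Length of a longest decreasing subsequence of `f`. -/
noncomputable def ldsLen {n : ℕ} {β : Type*} [Preorder β] (f : Fin n → β) : ℕ :=
  Finset.univ.sup fun s : Finset (Fin n) => if StrictAntiOn f ↑s then s.card else 0

section BSTAux
open BTree

theorem foldl_insert_node (l : List ℝ) : ∀ (L R : BTree) (y : ℝ),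
    l.foldl (fun t x => t.insert x) (node L y R)
      = node ((l.filter (fun x => decide (x < y))).foldl (fun t x => t.insert x) L) y
             ((l.filter (fun x => decide (¬ x < y))).foldl (fun t x => t.insert x) R) := by
  induction l with
  | nil => intro L R y; simp
  | cons x l ih =>
    intro L R y
    by_cases h : x < y
    · simp only [List.foldl_cons, List.filter_cons, decide_eq_true_eq, h,
        not_true, if_true, if_false, BTree.insert, if_pos h]
      exact ih (L.insert x) R y
    · simp only [List.foldl_cons, List.filter_cons, decide_eq_true_eq, h,
        not_false_iff, if_true, if_false, BTree.insert, if_neg h]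
      exact ih L (R.insert x) y

theorem bst_cons (x : ℝ) (l : List ℝ) :
    bstOfList (x :: l) = node (bstOfList (l.filter (fun z => decide (z < x)))) x
      (bstOfList (l.filter (fun z => decide (¬ z < x)))) := by
  show List.foldl _ (BTree.insert x .leaf) l = _
  have : BTree.insert x .leaf = node .leaf x .leaf := rfl
  rw [this, foldl_insert_node]
  rfl

theorem mem_bst : ∀ (l : List ℝ) (x : ℝ), Mem x (bstOfList l) ↔ x ∈ l
  | [], x => by simp [bstOfList, Mem]
  | (y :: t), x => by
    rw [bst_cons]
    have h1 := mem_bst (t.filter (fun z => decide (z < y))) x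
    have h2 := mem_bst (t.filter (fun z => decide (¬ z < y))) x
    simp only [Mem, h1, h2, List.mem_filter, List.mem_cons, decide_eq_true_eq]
    constructor
    · rintro (h | ⟨h, -⟩ | ⟨h, -⟩) <;> simp [h]
    · rintro (h | h)
      · exact Or.inl h
      · rcases lt_or_ge x y with hx | hx
        · exact Or.inr (Or.inl ⟨h, hx⟩)
        · exact Or.inr (Or.inr ⟨h, not_lt.mpr hx⟩)
  termination_by l _ => l.length
  decreasing_by
    all_goals exact Nat.lt_succ_of_le (List.length_filter_le _ _)

theorem anc_mem : ∀ (t : BTree) (u v : ℝ), IsAncestor u v t → Mem u t ∧ Mem v t := by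
  intro t
  induction t with
  | leaf => intro u v h; exact h.elim
  | node L y R ihl ihr =>
    intro u v h
    rcases h with ⟨rfl, h⟩ | h | h
    · exact ⟨Or.inl rfl, Or.inr h⟩
    · exact ⟨Or.inr (Or.inl (ihl u v h).1), Or.inr (Or.inl (ihl u v h).2)⟩
    · exact ⟨Or.inr (Or.inr (ihr u v h).1), Or.inr (Or.inr (ihr u v h).2)⟩

/-- Specification of the ancestor relation in terms of the insertion list. -/
def AncSpec (l : List ℝ) (u v : ℝ) : Prop :=
  ∃ l₁ l₂, l = l₁ ++ u :: l₂ ∧ v ∈ l₂ ∧ ∀ w ∈ l₁, w < min u v ∨ max u v < w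

theorem filter_eq_append_cons {α : Type*} (p : α → Bool) :
    ∀ (l : List α) {m₁ m₂ : List α} {u : α}, l.filter p = m₁ ++ u :: m₂ →
      ∃ l₁ l₂, l = l₁ ++ u :: l₂ ∧ l₁.filter p = m₁ ∧ l₂.filter p = m₂ := by
  intro l
  induction l with
  | nil => intro m₁ m₂ u h; simp at h
  | cons x t ih =>
    intro m₁ m₂ u h
    by_cases hp : p x
    · rw [List.filter_cons_of_pos hp] at h
      cases m₁ with
      | nil =>
        simp only [List.nil_append] at h ⊢
        obtain ⟨rfl, h2⟩ := List.cons_eq_cons.mp h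
        exact ⟨[], t, by simp, by simp [List.filter], h2⟩
      | cons z m₁' =>
        rw [List.cons_append] at h
        obtain ⟨rfl, h2⟩ := List.cons_eq_cons.mp h
        obtain ⟨l₁, l₂, rfl, hf1, hf2⟩ := ih h2
        exact ⟨x :: l₁, l₂, rfl, by rw [List.filter_cons_of_pos hp, hf1], hf2⟩
    · rw [List.filter_cons_of_neg hp] at h
      obtain ⟨l₁, l₂, rfl, hf1, hf2⟩ := ih h
      exact ⟨x :: l₁, l₂, rfl, by rw [List.filter_cons_of_neg hp, hf1], hf2⟩

theorem anc_iff : ∀ (l : List ℝ), l.Nodup → ∀ u v : ℝ,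
    IsAncestor u v (bstOfList l) ↔ AncSpec l u v
  | [], _, u, v => by
    simp [bstOfList, IsAncestor, AncSpec]
  | (x :: t), hnd, u, v => by
    obtain ⟨hxt, ht⟩ := List.nodup_cons.mp hnd
    have hndL : (t.filter (fun z => decide (z < x))).Nodup :=
      List.Nodup.sublist List.filter_sublist ht
    have hndR : (t.filter (fun z => decide (¬ z < x))).Nodup :=
      List.Nodup.sublist List.filter_sublist ht
    have ihL := anc_iff (t.filter (fun z => decide (z < x))) hndL u v
    have ihR := anc_iff (t.filter (fun z => decide (¬ z < x))) hndR u v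
    rw [bst_cons]
    constructor
    · rintro (⟨rfl, hv⟩ | h | h)
      · -- root case
        have hvt : v ∈ t := by
          rcases hv with hv | hv
          · exact List.mem_of_mem_filter ((mem_bst _ _).mp hv)
          · exact List.mem_of_mem_filter ((mem_bst _ _).mp hv)
        exact ⟨[], t, rfl, hvt, by simp⟩
      · -- left subtree
        obtain ⟨m₁, m₂, heq, hvm, hcond⟩ := ihL.mp h
        have hu : u ∈ t.filter (fun z => decide (z < x)) := by
          rw [heq]; exact List.mem_append_right _ (List.mem_cons_self)
        have hux : u < x := by
          have := (List.mem_filter.mp hu).2; simpa using this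
        obtain ⟨t₁, t₂, rfl, hf1, hf2⟩ := filter_eq_append_cons _ t heq
        have hvx : v < x := by
          have : v ∈ t₂.filter (fun z => decide (z < x)) := hf2 ▸ hvm
          have := (List.mem_filter.mp this).2; simpa using this
        refine ⟨x :: t₁, t₂, rfl, ?_, ?_⟩
        · exact List.mem_of_mem_filter (hf2 ▸ hvm)
        · intro w hw
          rcases List.mem_cons.mp hw with rfl | hw
          · exact Or.inr (max_lt hux hvx)
          · by_cases hwx : w < x
            · refine hcond w ?_
              rw [← hf1]; exact List.mem_filter.mpr ⟨hw, by simpa using hwx⟩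
            · exact Or.inr (lt_of_lt_of_le (max_lt hux hvx) (not_lt.mp hwx))
      · -- right subtree
        obtain ⟨m₁, m₂, heq, hvm, hcond⟩ := ihR.mp h
        have hu : u ∈ t.filter (fun z => decide (¬ z < x)) := by
          rw [heq]; exact List.mem_append_right _ (List.mem_cons_self)
        have hux : x < u := by
          have h1 : ¬ u < x := by have := (List.mem_filter.mp hu).2; simpa using this
          have h2 : u ≠ x := fun huv => hxt (huv ▸ List.mem_of_mem_filter hu)
          exact lt_of_le_of_ne (not_lt.mp h1) (Ne.symm h2)
        obtain ⟨t₁, t₂, rfl, hf1, hf2⟩ := filter_eq_append_cons _ t heq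
        have hvmem : v ∈ t₂.filter (fun z => decide (¬ z < x)) := hf2 ▸ hvm
        have hvx : x < v := by
          have h1 : ¬ v < x := by have := (List.mem_filter.mp hvmem).2; simpa using this
          have h2 : v ≠ x := fun hveq => hxt (hveq ▸
            List.mem_append_right _ (List.mem_cons_of_mem _ (List.mem_of_mem_filter hvmem)))
          exact lt_of_le_of_ne (not_lt.mp h1) (Ne.symm h2)
        refine ⟨x :: t₁, t₂, rfl, List.mem_of_mem_filter hvmem, ?_⟩
        · intro w hw
          rcases List.mem_cons.mp hw with rfl | hw
          · exact Or.inl (lt_min hux hvx)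
          · by_cases hwx : w < x
            · exact Or.inl (lt_trans hwx (lt_min hux hvx))
            · refine hcond w ?_
              rw [← hf1]; exact List.mem_filter.mpr ⟨hw, by simpa using hwx⟩
    · rintro ⟨l₁, l₂, heq, hv, hcond⟩
      cases l₁ with
      | nil =>
        obtain ⟨rfl, rfl⟩ : x = u ∧ t = l₂ := List.cons_eq_cons.mp heq
        by_cases hvx : v < x
        · exact Or.inl ⟨rfl, Or.inl ((mem_bst _ _).mpr
            (List.mem_filter.mpr ⟨hv, by simpa using hvx⟩))⟩
        · exact Or.inl ⟨rfl, Or.inr ((mem_bst _ _).mpr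
            (List.mem_filter.mpr ⟨hv, by simpa using hvx⟩))⟩
      | cons z l₁' =>
        obtain ⟨rfl, rfl⟩ : x = z ∧ t = l₁' ++ u :: l₂ :=
          List.cons_eq_cons.mp (by simpa using heq)
        have hx := hcond x (List.mem_cons_self)
        rcases hx with hx | hx
        · -- x < min u v : right subtree
          have hpu : (fun z => decide (¬ z < x)) u = true := by
            simp only [decide_eq_true_eq]
            exact not_lt.mpr (le_of_lt (lt_of_lt_of_le hx (min_le_left _ _)))
          refine Or.inr (Or.inr (ihR.mpr ⟨l₁'.filter (fun z => decide (¬ z < x)), l₂.filter (fun z => decide (¬ z < x)), ?_, ?_, ?_⟩))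
          · rw [List.filter_append]
            congr 1
            exact List.filter_cons_of_pos hpu
          · exact List.mem_filter.mpr ⟨hv, by
              simp only [decide_eq_true_eq]
              exact not_lt.mpr (le_of_lt (lt_of_lt_of_le hx (min_le_right _ _)))⟩
          · intro w hw
            exact hcond w (List.mem_cons_of_mem _ (List.mem_of_mem_filter hw))
        · -- max u v < x : left subtree
          have hpu : (fun z => decide (z < x)) u = true := by
            simp only [decide_eq_true_eq]
            exact lt_of_le_of_lt (le_max_left _ _) hx
          refine Or.inr (Or.inl (ihL.mpr ⟨l₁'.filter (fun z => decide (z < x)), l₂.filter (fun z => decide (z < x)), ?_, ?_, ?_⟩))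
          · rw [List.filter_append]
            congr 1
            exact List.filter_cons_of_pos hpu
          · exact List.mem_filter.mpr ⟨hv, by
              simp only [decide_eq_true_eq]
              exact lt_of_le_of_lt (le_max_right _ _) hx⟩
          · intro w hw
            exact hcond w (List.mem_cons_of_mem _ (List.mem_of_mem_filter hw))
  termination_by l _ _ _ => l.length
  decreasing_by
    all_goals exact Nat.lt_succ_of_le (List.length_filter_le _ _)

theorem exists_spine : ∀ (l : List ℝ), l.Nodup → ∃ C : Finset ℝ,
    (∀ x ∈ C, Mem x (bstOfList l)) ∧ IsChain (bstOfList l) ↑C ∧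
      depth (bstOfList l) ≤ C.card
  | [], _ => ⟨∅, by simp, by intro a ha; simp at ha, by simp [bstOfList, depth]⟩
  | (x :: t), hnd => by
    obtain ⟨hxt, ht⟩ := List.nodup_cons.mp hnd
    have hndL : (t.filter (fun z => decide (z < x))).Nodup :=
      List.Nodup.sublist List.filter_sublist ht
    have hndR : (t.filter (fun z => decide (¬ z < x))).Nodup :=
      List.Nodup.sublist List.filter_sublist ht
    obtain ⟨CL, hmL, hcL, hdL⟩ := exists_spine (t.filter (fun z => decide (z < x))) hndL
    obtain ⟨CR, hmR, hcR, hdR⟩ := exists_spine (t.filter (fun z => decide (¬ z < x))) hndR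
    rw [bst_cons]
    set Lt := bstOfList (t.filter (fun z => decide (z < x))) with hLt
    set Rt := bstOfList (t.filter (fun z => decide (¬ z < x))) with hRt
    rcases le_total (depth Rt) (depth Lt) with hcmp | hcmp
    · -- use the left spine
      have hxC : x ∉ CL := fun hx =>
        hxt (List.mem_of_mem_filter ((mem_bst _ _).mp (hmL x hx)))
      refine ⟨Insert.insert x CL, ?_, ?_, ?_⟩
      · intro y hy
        rcases Finset.mem_insert.mp hy with rfl | hy
        · exact Or.inl rfl
        · exact Or.inr (Or.inl (hmL y hy))
      · intro p hp q hq
        rcases Finset.mem_insert.mp (by exact_mod_cast hp) with rfl | hp' <;>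
          rcases Finset.mem_insert.mp (by exact_mod_cast hq) with rfl | hq'
        · exact Or.inl rfl
        · exact Or.inr (Or.inl (Or.inl ⟨rfl, Or.inl (hmL q hq')⟩))
        · exact Or.inr (Or.inr (Or.inl ⟨rfl, Or.inl (hmL p hp')⟩))
        · rcases hcL p (by exact_mod_cast hp') q (by exact_mod_cast hq') with h | h | h
          · exact Or.inl h
          · exact Or.inr (Or.inl (Or.inr (Or.inl h)))
          · exact Or.inr (Or.inr (Or.inr (Or.inl h)))
      · rw [Finset.card_insert_of_notMem hxC]
        simp only [depth, max_eq_left hcmp]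
        omega
    · -- use the right spine
      have hxC : x ∉ CR := fun hx =>
        hxt (List.mem_of_mem_filter ((mem_bst _ _).mp (hmR x hx)))
      refine ⟨Insert.insert x CR, ?_, ?_, ?_⟩
      · intro y hy
        rcases Finset.mem_insert.mp hy with rfl | hy
        · exact Or.inl rfl
        · exact Or.inr (Or.inr (hmR y hy))
      · intro p hp q hq
        rcases Finset.mem_insert.mp (by exact_mod_cast hp) with rfl | hp' <;>
          rcases Finset.mem_insert.mp (by exact_mod_cast hq) with rfl | hq'
        · exact Or.inl rfl
        · exact Or.inr (Or.inl (Or.inl ⟨rfl, Or.inr (hmR q hq')⟩))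
        · exact Or.inr (Or.inr (Or.inl ⟨rfl, Or.inr (hmR p hp')⟩))
        · rcases hcR p (by exact_mod_cast hp') q (by exact_mod_cast hq') with h | h | h
          · exact Or.inl h
          · exact Or.inr (Or.inl (Or.inr (Or.inr h)))
          · exact Or.inr (Or.inr (Or.inr (Or.inr h)))
      · rw [Finset.card_insert_of_notMem hxC]
        simp only [depth, max_eq_right hcmp]
        omega
  termination_by l _ => l.length
  decreasing_by
    all_goals exact Nat.lt_succ_of_le (List.length_filter_le _ _)

theorem chain_card_le : ∀ (l : List ℝ) (C : Finset ℝ),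
    (∀ x ∈ C, Mem x (bstOfList l)) → IsChain (bstOfList l) ↑C →
      C.card ≤ depth (bstOfList l)
  | [], C, hmem, _ => by
    have : C = ∅ := Finset.eq_empty_of_forall_notMem fun x hx => hmem x hx
    simp [this, bstOfList, depth]
  | (x :: t), C, hmem, hchain => by
    rw [bst_cons] at hmem hchain ⊢
    set Lt := bstOfList (t.filter (fun z => decide (z < x))) with hLt
    set Rt := bstOfList (t.filter (fun z => decide (¬ z < x))) with hRt
    have key : ∀ c, Mem c Lt → Mem c Rt → False := by
      intro c h1 h2
      have h1' : c < x := by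
        have := (List.mem_filter.mp ((mem_bst _ _).mp h1)).2; simpa using this
      have h2' : ¬ c < x := by
        have := (List.mem_filter.mp ((mem_bst _ _).mp h2)).2; simpa using this
      exact h2' h1'
    set C' := C.erase x with hC'
    have hsub : ∀ c ∈ C', c ∈ C := fun c hc => Finset.mem_of_mem_erase hc
    have hne : ∀ c ∈ C', c ≠ x := fun c hc => Finset.ne_of_mem_erase hc
    have hC'mem : ∀ c ∈ C', Mem c Lt ∨ Mem c Rt := by
      intro c hc
      rcases hmem c (hsub c hc) with h | h
      · exact absurd h (hne c hc)
      · exact h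
    have dich : (∀ c ∈ C', Mem c Lt) ∨ (∀ c ∈ C', Mem c Rt) := by
      by_contra hcon
      push_neg at hcon
      obtain ⟨⟨c₁, hc₁, h1⟩, ⟨c₂, hc₂, h2⟩⟩ := hcon
      have m1 : Mem c₁ Rt := (hC'mem c₁ hc₁).resolve_left h1
      have m2 : Mem c₂ Lt := (hC'mem c₂ hc₂).resolve_right h2
      have hne12 : c₁ ≠ c₂ := fun h => h1 (h ▸ m2)
      rcases hchain c₁ (by exact_mod_cast hsub c₁ hc₁) c₂ (by exact_mod_cast hsub c₂ hc₂)
        with h | h | h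
      · exact hne12 h
      · rcases h with ⟨h, -⟩ | h | h
        · exact hne c₁ hc₁ h
        · exact key c₁ (anc_mem _ _ _ h).1 m1
        · exact key c₂ m2 (anc_mem _ _ _ h).2
      · rcases h with ⟨h, -⟩ | h | h
        · exact hne c₂ hc₂ h
        · exact key c₁ (anc_mem _ _ _ h).2 m1
        · exact key c₂ m2 (anc_mem _ _ _ h).1
    have hcard : C.card ≤ C'.card + 1 := by
      have : C ⊆ Insert.insert x C' := by
        intro c hc
        by_cases hcx : c = x
        · simp [hcx]
        · exact Finset.mem_insert_of_mem (Finset.mem_erase.mpr ⟨hcx, hc⟩)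
      calc C.card ≤ (Insert.insert x C').card := Finset.card_le_card this
        _ ≤ C'.card + 1 := Finset.card_insert_le _ _
    rcases dich with hall | hall
    · have hch' : IsChain Lt ↑C' := by
        intro p hp q hq
        have hp' : p ∈ C' := by exact_mod_cast hp
        have hq' : q ∈ C' := by exact_mod_cast hq
        rcases hchain p (by exact_mod_cast hsub p hp') q (by exact_mod_cast hsub q hq')
          with h | h | h
        · exact Or.inl h
        · rcases h with ⟨h, -⟩ | h | h
          · exact absurd h (hne p hp')
          · exact Or.inr (Or.inl h)
          · exact absurd (anc_mem _ _ _ h).2 (fun hm => key q (hall q hq') hm)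
        · rcases h with ⟨h, -⟩ | h | h
          · exact absurd h (hne q hq')
          · exact Or.inr (Or.inr h)
          · exact absurd (anc_mem _ _ _ h).2 (fun hm => key p (hall p hp') hm)
      have ih := chain_card_le (t.filter (fun z => decide (z < x))) C' hall hch'
      simp only [depth]
      calc C.card ≤ C'.card + 1 := hcard
        _ ≤ depth Lt + 1 := by rw [← hLt] at ih; omega
        _ ≤ 1 + max (depth Lt) (depth Rt) := by omega
    · have hch' : IsChain Rt ↑C' := by
        intro p hp q hq
        have hp' : p ∈ C' := by exact_mod_cast hp
        have hq' : q ∈ C' := by exact_mod_cast hq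
        rcases hchain p (by exact_mod_cast hsub p hp') q (by exact_mod_cast hsub q hq')
          with h | h | h
        · exact Or.inl h
        · rcases h with ⟨h, -⟩ | h | h
          · exact absurd h (hne p hp')
          · exact absurd (anc_mem _ _ _ h).2 (fun hm => key q hm (hall q hq'))
          · exact Or.inr (Or.inl h)
        · rcases h with ⟨h, -⟩ | h | h
          · exact absurd h (hne q hq')
          · exact absurd (anc_mem _ _ _ h).2 (fun hm => key p hm (hall p hp'))
          · exact Or.inr (Or.inr h)
      have ih := chain_card_le (t.filter (fun z => decide (¬ z < x))) C' hall hch'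
      simp only [depth]
      calc C.card ≤ C'.card + 1 := hcard
        _ ≤ depth Rt + 1 := by rw [← hRt] at ih; omega
        _ ≤ 1 + max (depth Lt) (depth Rt) := by omega
  termination_by l _ _ _ => l.length
  decreasing_by
    all_goals exact Nat.lt_succ_of_le (List.length_filter_le _ _)

theorem ancSpec_transfer (P : List (ℝ × ℝ)) (hxs : P.Pairwise (fun p q => p.1 < q.1))
    (δ a b : ℝ) (pred : ℝ × ℝ → Bool)
    (hpred : ∀ q, pred q = true ↔ (q.1 ≤ δ ∧ a ≤ q.2 ∧ q.2 ≤ b))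
    {u v : ℝ} (h : AncSpec ((P.filter pred).map Prod.snd) u v) :
    AncSpec (P.map Prod.snd) u v := by
  obtain ⟨m₁, m₂, heq, hv, hcond⟩ := h
  obtain ⟨Q₁, Q', hfil, hm1, hm2⟩ := List.map_eq_append_iff.mp heq
  cases Q' with
  | nil => simp at hm2
  | cons pu Q₂ =>
  rw [List.map_cons] at hm2
  obtain ⟨hu2, hm2⟩ := List.cons_eq_cons.mp hm2
  obtain ⟨P₁, P₂, rfl, hf1, hf2⟩ := filter_eq_append_cons pred P hfil
  have hpu : pred pu = true := by
    have : pu ∈ (P₁ ++ pu :: P₂).filter pred := by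
      rw [hfil]; exact List.mem_append_right _ (List.mem_cons_self)
    exact (List.mem_filter.mp this).2
  obtain ⟨hpuδ, hpua, hpub⟩ := (hpred pu).mp hpu
  have hva : a ≤ v ∧ v ≤ b := by
    rw [← hm2, ← hf2] at hv
    obtain ⟨qv, hqv, rfl⟩ := List.mem_map.mp hv
    obtain ⟨-, h2, h3⟩ := (hpred qv).mp (List.mem_filter.mp hqv).2
    exact ⟨h2, h3⟩
  refine ⟨P₁.map Prod.snd, P₂.map Prod.snd, ?_, ?_, ?_⟩
  · rw [List.map_append, List.map_cons, hu2]
  · rw [← hm2, ← hf2] at hv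
    obtain ⟨qv, hqv, rfl⟩ := List.mem_map.mp hv
    exact List.mem_map.mpr ⟨qv, List.mem_of_mem_filter hqv, rfl⟩
  · intro w hw
    obtain ⟨q, hq, rfl⟩ := List.mem_map.mp hw
    by_contra hcon
    push_neg at hcon
    obtain ⟨h1, h2⟩ := hcon
    have hwa : a ≤ q.2 := le_trans (le_min (hu2 ▸ hpua) hva.1) h1
    have hwb : q.2 ≤ b := le_trans h2 (max_le (hu2 ▸ hpub) hva.2)
    have hqx : q.1 < pu.1 :=
      (List.pairwise_append.mp hxs).2.2 q hq pu (List.mem_cons_self)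
    have hqpred : pred q = true := (hpred q).mpr ⟨le_trans (le_of_lt hqx) hpuδ, hwa, hwb⟩
    have : q.2 ∈ m₁ := by
      rw [← hm1, ← hf1]
      exact List.mem_map.mpr ⟨q, List.mem_filter.mpr ⟨hq, hqpred⟩, rfl⟩
    rcases hcond q.2 this with h | h
    · exact absurd h1 (not_le.mpr h)
    · exact absurd h2 (not_le.mpr h)


end BSTAux

open scoped Classical in
/-- **Chains of the BST of the points in a left rectangle are chains of the full BST.**
For a point set `P` with distinct coordinates and nonnegative `x`-coordinates (listed by
increasing `x`) and a rectangle `R = [0,δ] × [a,b]`, every chain of `BST(P ∩ R)` is a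
chain of `BST(P)`; consequently `h(BST(P ∩ R)) ≤ h(BST(P))`. -/
theorem stmt16 (P : List (ℝ × ℝ)) (hxs : P.Pairwise (fun p q => p.1 < q.1))
    (hyd : P.Pairwise (fun p q => p.2 ≠ q.2))
    (hx0 : ∀ p ∈ P, 0 ≤ p.1)
    (δ a b : ℝ) :
    (∀ C : Set ℝ,
        BTree.IsChain
          (bstOfSortedPts (P.filter
            (fun q => decide (q.1 ≤ δ ∧ a ≤ q.2 ∧ q.2 ≤ b)))) C →
        BTree.IsChain (bstOfSortedPts P) C)
    ∧ (bstOfSortedPts (P.filter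
          (fun q => decide (q.1 ≤ δ ∧ a ≤ q.2 ∧ q.2 ≤ b)))).height
        ≤ (bstOfSortedPts P).height := by
  set pred : ℝ × ℝ → Bool := fun q => decide (q.1 ≤ δ ∧ a ≤ q.2 ∧ q.2 ≤ b) with hpreddef
  have hpred : ∀ q, pred q = true ↔ (q.1 ≤ δ ∧ a ≤ q.2 ∧ q.2 ≤ b) := by
    intro q; simp [hpreddef]
  have hys_nodup : (P.map Prod.snd).Nodup := List.pairwise_map.mpr hyd
  have hfil_nodup : ((P.filter pred).map Prod.snd).Nodup :=
    List.pairwise_map.mpr (List.Pairwise.sublist List.filter_sublist hyd)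
  have anc_transfer : ∀ u v : ℝ, BTree.IsAncestor u v (bstOfSortedPts (P.filter pred)) →
      BTree.IsAncestor u v (bstOfSortedPts P) := by
    intro u v h
    have h1 := (anc_iff _ hfil_nodup u v).mp h
    exact (anc_iff _ hys_nodup u v).mpr (ancSpec_transfer P hxs δ a b pred hpred h1)
  have part1 : ∀ C : Set ℝ, BTree.IsChain (bstOfSortedPts (P.filter pred)) C →
      BTree.IsChain (bstOfSortedPts P) C := by
    intro C hC p hp q hq
    rcases hC p hp q hq with h | h | h
    · exact Or.inl h
    · exact Or.inr (Or.inl (anc_transfer p q h))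
    · exact Or.inr (Or.inr (anc_transfer q p h))
  refine ⟨part1, ?_⟩
  have hd : (bstOfSortedPts (P.filter pred)).depth ≤ (bstOfSortedPts P).depth := by
    obtain ⟨C, hmem, hchain, hcard⟩ := exists_spine ((P.filter pred).map Prod.snd) hfil_nodup
    have hmem' : ∀ x ∈ C, BTree.Mem x (bstOfList (P.map Prod.snd)) := by
      intro x hx
      have hx' : x ∈ (P.filter pred).map Prod.snd := (mem_bst _ _).mp (hmem x hx)
      exact (mem_bst _ _).mpr (((List.filter_sublist : (P.filter pred).Sublist P).map Prod.snd).subset hx')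
    have hchain' : BTree.IsChain (bstOfList (P.map Prod.snd)) ↑C := part1 ↑C hchain
    calc (bstOfSortedPts (P.filter pred)).depth ≤ C.card := hcard
      _ ≤ (bstOfSortedPts P).depth := chain_card_le (P.map Prod.snd) C hmem' hchain'
  exact Int.sub_le_sub_right (Nat.cast_le.mpr hd) 1
end

section
/- Let $y^- = (y_1^-, \dots, y_m^-)$ be a subsequence of the sequence of distinct reals $y^+ = (y_1^+, \dots, y_n^+)$. If $(y^+_{i_1}, \dots, y^+_{i_\ell})$ is a chain in $\mathrm{BST}(y^+)$ (listed in order of insertion), then for any triple of indices $k < i_j < i_{j'}$ with $i_j, i_{j'} \in \{i_1,\dots,i_\ell\}$, one has $(y_{i_j}^+ - y_k^+)(y_{i_{j'}}^+ - y_k^+) > 0$; and conversely this condition on all such triples implies that the values form a chain. -/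
def Betw (x a b : ℝ) : Prop := (a - x) * (b - x) < 0

def Anc : List ℝ → ℝ → ℝ → Prop
  | [], _, _ => False
  | c :: l, a, b => (a = c ∧ b ∈ l) ∨ (a ≠ c ∧ ¬ Betw c a b ∧ Anc l a b)

theorem mem_insert {x a : ℝ} {t : BTree} : BTree.Mem x (t.insert a) ↔ x = a ∨ BTree.Mem x t := by
  induction t with
  | leaf => simp [BTree.insert, BTree.Mem]
  | node l y r ihl ihr =>
    simp only [BTree.insert]
    split <;> simp [BTree.Mem, ihl, ihr] <;> tauto

theorem mem_foldl {x : ℝ} {t : BTree} {l : List ℝ} :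
    BTree.Mem x (l.foldl (fun t x => t.insert x) t) ↔ BTree.Mem x t ∨ x ∈ l := by
  induction l generalizing t with
  | nil => simp
  | cons c l ih => simp [List.foldl_cons, ih, mem_insert]; tauto

theorem mem_bstOfList {x : ℝ} {l : List ℝ} : BTree.Mem x (bstOfList l) ↔ x ∈ l := by
  simp [bstOfList, mem_foldl, BTree.Mem]

theorem isAncestor_mem {a b : ℝ} {t : BTree} (h : BTree.IsAncestor a b t) :
    BTree.Mem a t ∧ BTree.Mem b t := by
  induction t with
  | leaf => exact absurd h id
  | node l y r ihl ihr =>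
    rcases h with ⟨rfl, h⟩ | h | h
    · exact ⟨Or.inl rfl, Or.inr h⟩
    · exact ⟨Or.inr (Or.inl (ihl h).1), Or.inr (Or.inl (ihl h).2)⟩
    · exact ⟨Or.inr (Or.inr (ihr h).1), Or.inr (Or.inr (ihr h).2)⟩

theorem anc_mem_s17 {a b : ℝ} {l : List ℝ} (h : Anc l a b) : a ∈ l ∧ b ∈ l := by
  induction l with
  | nil => exact absurd h id
  | cons c l ih =>
    rcases h with ⟨rfl, h⟩ | ⟨_, _, h⟩
    · exact ⟨List.mem_cons_self, List.mem_cons_of_mem _ h⟩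
    · exact ⟨List.mem_cons_of_mem _ (ih ‹_›).1, List.mem_cons_of_mem _ (ih ‹_›).2⟩

theorem foldl_node {c : ℝ} (L R : BTree) (l : List ℝ) :
    l.foldl (fun t x => t.insert x) (BTree.node L c R) =
      BTree.node ((l.filter (fun x => decide (x < c))).foldl (fun t x => t.insert x) L) c
        ((l.filter (fun x => !decide (x < c))).foldl (fun t x => t.insert x) R) := by
  induction l generalizing L R with
  | nil => simp
  | cons x l ih =>
    simp only [List.foldl_cons, BTree.insert, List.filter_cons]
    by_cases h : x < c <;> simp [h, ih]

theorem bstOfList_cons {c : ℝ} {l : List ℝ} :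
    bstOfList (c :: l) =
      BTree.node (bstOfList (l.filter (fun x => decide (x < c)))) c
        (bstOfList (l.filter (fun x => !decide (x < c)))) := by
  show List.foldl _ _ _ = _
  rw [List.foldl_cons]
  show List.foldl _ (BTree.node .leaf c .leaf) _ = _
  exact foldl_node _ _ _

theorem anc_filter {p : ℝ → Bool} {a b : ℝ} (hb : p b = true)
    (hp : ∀ x, p x = false → x ≠ a ∧ ¬ Betw x a b) :
    ∀ {l : List ℝ}, (Anc (l.filter p) a b ↔ Anc l a b) := by
  intro l
  induction l with
  | nil => simp
  | cons x l ih =>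
    cases h : p x with
    | false =>
      have hx := hp x h
      simp only [List.filter_cons, h, Bool.false_eq_true, if_false, ih]
      show Anc l a b ↔ (a = x ∧ b ∈ l) ∨ (a ≠ x ∧ ¬ Betw x a b ∧ Anc l a b)
      constructor
      · exact fun h' => Or.inr ⟨hx.1.symm, hx.2, h'⟩
      · rintro (⟨rfl, _⟩ | ⟨_, _, h'⟩)
        · exact absurd rfl hx.1
        · exact h'
    | true =>
      simp only [List.filter_cons, h, if_true]
      show ((a = x ∧ b ∈ l.filter p) ∨ _) ↔ ((a = x ∧ b ∈ l) ∨ _)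
      rw [ih, List.mem_filter, hb]; simp

theorem isAncestor_bst : ∀ (l : List ℝ), l.Nodup → ∀ a b : ℝ, a ≠ b →
    (BTree.IsAncestor a b (bstOfList l) ↔ Anc l a b)
  | [] => by
    intro _ a b _
    show BTree.IsAncestor a b (List.foldl _ _ _) ↔ False
    simp [BTree.IsAncestor]
  | c :: l => by
    intro hl a b hab
    have hcl : c ∉ l := (List.nodup_cons.1 hl).1
    have hl' : l.Nodup := (List.nodup_cons.1 hl).2
    rw [bstOfList_cons]
    show ((a = c ∧ (BTree.Mem b _ ∨ BTree.Mem b _)) ∨ _ ∨ _) ↔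
      ((a = c ∧ b ∈ l) ∨ (a ≠ c ∧ ¬ Betw c a b ∧ Anc l a b))
    have hmemL : ∀ x, BTree.Mem x (bstOfList (l.filter (fun x => decide (x < c)))) ↔
        x ∈ l ∧ x < c := by
      intro x; rw [mem_bstOfList, List.mem_filter]; simp
    have hmemR : ∀ x, BTree.Mem x (bstOfList (l.filter (fun x => !decide (x < c)))) ↔
        x ∈ l ∧ ¬ x < c := by
      intro x; rw [mem_bstOfList, List.mem_filter]; simp
    by_cases hac : a = c
    · subst hac
      have hL : ¬ BTree.IsAncestor a b (bstOfList (l.filter (fun x => decide (x < a)))) := fun h =>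
        hcl ((hmemL a).1 (isAncestor_mem h).1).1
      have hR : ¬ BTree.IsAncestor a b (bstOfList (l.filter (fun x => !decide (x < a)))) := fun h =>
        hcl ((hmemR a).1 (isAncestor_mem h).1).1
      constructor
      · rintro (⟨-, h | h⟩ | h | h)
        · exact Or.inl ⟨rfl, ((hmemL b).1 h).1⟩
        · exact Or.inl ⟨rfl, ((hmemR b).1 h).1⟩
        · exact absurd h hL
        · exact absurd h hR
      · rintro (⟨-, h⟩ | ⟨h, -⟩)
        · refine Or.inl ⟨rfl, ?_⟩
          rcases lt_or_gt_of_ne (show b ≠ a from fun e => hcl (e ▸ h)) with hb | hb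
          · exact Or.inl ((hmemL b).2 ⟨h, hb⟩)
          · exact Or.inr ((hmemR b).2 ⟨h, not_lt.2 hb.le⟩)
        · exact absurd rfl h
    · by_cases hbc : b = c
      · have hL : ¬ BTree.IsAncestor a b (bstOfList (l.filter (fun x => decide (x < c)))) :=
          fun h => hcl (hbc ▸ ((hmemL b).1 (isAncestor_mem h).2).1)
        have hR : ¬ BTree.IsAncestor a b (bstOfList (l.filter (fun x => !decide (x < c)))) :=
          fun h => hcl (hbc ▸ ((hmemR b).1 (isAncestor_mem h).2).1)
        have hA : ¬ Anc l a b := fun h => hcl (hbc ▸ (anc_mem_s17 h).2)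
        simp [hL, hR, hac, hA]
      · by_cases hbtw : Betw c a b
        · have hL : ¬ BTree.IsAncestor a b (bstOfList (l.filter (fun x => decide (x < c)))) := by
            intro h
            have h1 := ((hmemL a).1 (isAncestor_mem h).1).2
            have h2 := ((hmemL b).1 (isAncestor_mem h).2).2
            have : (0:ℝ) < (a - c) * (b - c) :=
              mul_pos_of_neg_of_neg (by linarith) (by linarith)
            exact absurd hbtw (by unfold Betw; linarith)
          have hR : ¬ BTree.IsAncestor a b (bstOfList (l.filter (fun x => !decide (x < c)))) := by
            intro h
            have h1 := ((hmemR a).1 (isAncestor_mem h).1).2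
            have h2 := ((hmemR b).1 (isAncestor_mem h).2).2
            have ha' : c < a := lt_of_le_of_ne (not_lt.1 h1) (Ne.symm hac)
            have hb' : c < b := lt_of_le_of_ne (not_lt.1 h2) (Ne.symm hbc)
            have : (0:ℝ) < (a - c) * (b - c) := mul_pos (by linarith) (by linarith)
            exact absurd hbtw (by unfold Betw; linarith)
          simp [hL, hR, hac, hbtw]
        · have hprod : (a < c ∧ b < c) ∨ (c < a ∧ c < b) := by
            have h3 : ¬ (a - c) * (b - c) < 0 := hbtw
            rcases lt_or_gt_of_ne (sub_ne_zero.2 hac) with ha | ha <;>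
              rcases lt_or_gt_of_ne (sub_ne_zero.2 hbc) with hb | hb
            · exact Or.inl ⟨by linarith, by linarith⟩
            · exact absurd (mul_neg_of_neg_of_pos ha hb) h3
            · exact absurd (mul_neg_of_pos_of_neg ha hb) h3
            · exact Or.inr ⟨by linarith, by linarith⟩
          rcases hprod with ⟨ha, hb⟩ | ⟨ha, hb⟩
          · have hR : ¬ BTree.IsAncestor a b (bstOfList (l.filter (fun x => !decide (x < c)))) :=
              fun h => absurd ha ((hmemR a).1 (isAncestor_mem h).1).2
            have key := isAncestor_bst (l.filter (fun x => decide (x < c)))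
              (hl'.filter _) a b hab
            have hfa : Anc (l.filter (fun x => decide (x < c))) a b ↔ Anc l a b := by
              apply anc_filter (by simp [hb])
              intro x hx
              simp only [decide_eq_false_iff_not, not_lt] at hx
              refine ⟨fun e => absurd (e ▸ hx) (not_le.2 ha), fun hB => ?_⟩
              have hB' : (a - x) * (b - x) < 0 := hB
              nlinarith [mul_nonneg (show (0:ℝ) ≤ x - a by linarith) (show (0:ℝ) ≤ x - b by linarith)]
            simp [hR, hac, hbtw, key, hfa]
          · have hL : ¬ BTree.IsAncestor a b (bstOfList (l.filter (fun x => decide (x < c)))) :=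
              fun h => absurd ((hmemL a).1 (isAncestor_mem h).1).2 (not_lt.2 ha.le)
            have key := isAncestor_bst (l.filter (fun x => !decide (x < c)))
              (hl'.filter _) a b hab
            have hfa : Anc (l.filter (fun x => !decide (x < c))) a b ↔ Anc l a b := by
              apply anc_filter (by simp [not_lt.2 hb.le])
              intro x hx
              simp only [Bool.not_eq_false', decide_eq_true_eq] at hx
              refine ⟨fun e => absurd (e ▸ hx) (not_lt.2 ha.le), fun hB => ?_⟩
              have hB' : (a - x) * (b - x) < 0 := hB
              nlinarith [mul_nonneg (show (0:ℝ) ≤ a - x by linarith) (show (0:ℝ) ≤ b - x by linarith)]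
            simp [hL, hac, hbtw, key, hfa]
termination_by l => l.length
decreasing_by all_goals
  simp only [List.length_cons, Nat.lt_succ_iff]
  exact List.length_filter_le _ _

theorem anc_append {a b : ℝ} {l2 : List ℝ} : ∀ {l1 : List ℝ}, a ∉ l1 →
    (Anc (l1 ++ a :: l2) a b ↔ b ∈ l2 ∧ ∀ x ∈ l1, ¬ Betw x a b) := by
  intro l1
  induction l1 with
  | nil =>
    intro _
    show (a = a ∧ b ∈ l2) ∨ (a ≠ a ∧ ¬ Betw a a b ∧ Anc l2 a b) ↔ _
    simp
  | cons x l1 ih =>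
    intro h
    have hax : a ≠ x := fun e => h (e ▸ (List.mem_cons_self : x ∈ x :: l1))
    show (a = x ∧ b ∈ l1 ++ a :: l2) ∨ (a ≠ x ∧ ¬ Betw x a b ∧ Anc (l1 ++ a :: l2) a b) ↔ _
    rw [ih (fun hh => h (List.mem_cons_of_mem _ hh))]
    simp only [List.forall_mem_cons, hax, false_and, ne_eq, not_false_iff, true_and, false_or]
    tauto

theorem anc_ofFn {n : ℕ} {y : Fin n → ℝ} (hy : Function.Injective y) (i j : Fin n) :
    Anc (List.ofFn y) (y i) (y j) ↔ i < j ∧ ∀ k, k < i → ¬ Betw (y k) (y i) (y j) := by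
  have hlen : (List.ofFn y).length = n := List.length_ofFn
  have hi' : (i : ℕ) < (List.ofFn y).length := by rw [hlen]; exact i.isLt
  have E : List.ofFn y = (List.ofFn y).take i ++ y i :: (List.ofFn y).drop (i + 1) := by
    conv_lhs => rw [← List.take_append_drop i (List.ofFn y)]
    rw [List.drop_eq_getElem_cons hi', List.getElem_ofFn]
  have hnotmem : y i ∉ (List.ofFn y).take i := by
    intro hmem
    obtain ⟨m, hm, e⟩ := List.mem_take_iff_getElem.1 hmem
    rw [List.getElem_ofFn] at e
    have hmi : m < (i : ℕ) := hm.trans_le (min_le_left _ _)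
    have := congrArg Fin.val (hy e)
    simp at this
    omega
  have key := anc_append (a := y i) (b := y j) (l2 := (List.ofFn y).drop (i + 1)) hnotmem
  rw [← E] at key
  rw [key]
  constructor
  · rintro ⟨hbj, hx⟩
    obtain ⟨m, hm, e⟩ := List.mem_iff_getElem.1 hbj
    rw [List.getElem_drop, List.getElem_ofFn] at e
    have hij : (i : ℕ) + 1 + m = (j : ℕ) := by
      have := congrArg Fin.val (hy e); simpa using this
    refine ⟨Fin.lt_def.2 (by omega), fun k hk => ?_⟩
    apply hx
    have hk2 : (k : ℕ) < (i : ℕ) := hk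
    have hk' : (k : ℕ) < ((List.ofFn y).take i).length := by
      simp [hlen]
      omega
    have hg : ((List.ofFn y).take (i : ℕ))[(k : ℕ)] = y k := by
      rw [List.getElem_take, List.getElem_ofFn]
    rw [← hg]
    exact List.getElem_mem _
  · rintro ⟨hij, hk⟩
    have hij' : (i : ℕ) < (j : ℕ) := hij
    constructor
    · have h1 : (j : ℕ) - ((i : ℕ) + 1) < ((List.ofFn y).drop ((i : ℕ) + 1)).length := by
        simp [hlen]; omega
      have hg : ((List.ofFn y).drop ((i : ℕ) + 1))[(j : ℕ) - ((i : ℕ) + 1)] = y j := by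
        rw [List.getElem_drop, List.getElem_ofFn]
        apply congrArg y
        apply Fin.ext
        simp
        omega
      rw [← hg]
      exact List.getElem_mem _
    · intro x hx
      obtain ⟨m, hm, e⟩ := List.mem_take_iff_getElem.1 hx
      rw [List.getElem_ofFn] at e
      have hmi : m < (i : ℕ) := hm.trans_le (min_le_left _ _)
      rw [← e]
      exact hk ⟨m, by omega⟩ (by simpa [Fin.lt_def] using hmi)


/-- **Characterization of chains of a BST.** For distinct reals `y 0, …, y (n-1)`
inserted in order, a set of indices `I` labels a chain of `BST(y)` if and only if for
every triple `k < i < j` with `i, j ∈ I`, the value `y k` does not lie strictly between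
`y i` and `y j`, i.e. `(y i - y k) * (y j - y k) > 0`. -/
theorem stmt17 {n : ℕ} (y : Fin n → ℝ) (hy : Function.Injective y) (I : Finset (Fin n)) :
    BTree.IsChain (bstOfList (List.ofFn y)) (y '' (I : Set (Fin n))) ↔
      ∀ k i j : Fin n, i ∈ I → j ∈ I → k < i → i < j →
        0 < (y i - y k) * (y j - y k) := by
  have hnd : (List.ofFn y).Nodup := List.nodup_ofFn.2 hy
  constructor
  · intro hch k i j hi hj hki hij
    have hij' : y i ≠ y j := fun e => absurd (hy e) hij.ne
    rcases hch (y i) ⟨i, hi, rfl⟩ (y j) ⟨j, hj, rfl⟩ with he | h | h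
    · exact absurd (hy he) hij.ne
    · rw [isAncestor_bst _ hnd _ _ hij', anc_ofFn hy] at h
      have hB := h.2 k hki
      have h1 : y i - y k ≠ 0 := sub_ne_zero.2 fun e => absurd (hy e) hki.ne'
      have h2 : y j - y k ≠ 0 := sub_ne_zero.2 fun e => absurd (hy e) (hki.trans hij).ne'
      have hB' : ¬ (y i - y k) * (y j - y k) < 0 := hB
      exact lt_of_le_of_ne (not_lt.1 hB') (Ne.symm (mul_ne_zero h1 h2))
    · rw [isAncestor_bst _ hnd _ _ hij'.symm, anc_ofFn hy] at h
      exact absurd h.1 (not_lt.2 hij.le)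
  · rintro H a ⟨i, hi, rfl⟩ b ⟨j, hj, rfl⟩
    rw [Finset.mem_coe] at hi hj
    rcases lt_trichotomy i j with hij | hij | hij
    · refine Or.inr (Or.inl ?_)
      rw [isAncestor_bst _ hnd _ _ (fun e => absurd (hy e) hij.ne), anc_ofFn hy]
      refine ⟨hij, fun k hk => ?_⟩
      have := H k i j hi hj hk hij
      show ¬ (y i - y k) * (y j - y k) < 0
      linarith
    · exact Or.inl (by rw [hij])
    · refine Or.inr (Or.inr ?_)
      rw [isAncestor_bst _ hnd _ _ (fun e => absurd (hy e) hij.ne), anc_ofFn hy]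
      refine ⟨hij, fun k hk => ?_⟩
      have := H k j i hj hi hk hij
      show ¬ (y j - y k) * (y i - y k) < 0
      linarith
end
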